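/- arXiv:2209.05659 — 5 statements merged into one kernel-verified Lean document; each statement's English description precedes it below -/
import Mathlib

section
/- Immunity Lemma: If A is not Turing reducible to B, then there is a set S ≤_T A such that S is immune to B-computable sets, i.e., S is infinite and no infinite B-computable set is a subset of S. -/
open Classical in
noncomputable def chi (A : Set ℕ) : ℕ →. ℕ := fun n => Part.some (if n ∈ A then 1 else 0)

/-- Functions partial recursive in an oracle `O`. -/
inductive RecursiveInOracle (O : ℕ →. ℕ) : (ℕ →. ℕ) → Prop
  | zero : RecursiveInOracle O (pure 0)
  | succ : RecursiveInOracle O (fun n => Part.some (n + 1))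
  | left : RecursiveInOracle O (fun n => Part.some n.unpair.1)
  | right : RecursiveInOracle O (fun n => Part.some n.unpair.2)
  | oracle : RecursiveInOracle O O
  | pair {f g} : RecursiveInOracle O f → RecursiveInOracle O g →
      RecursiveInOracle O fun n => Nat.pair <$> f n <*> g n
  | comp {f g} : RecursiveInOracle O f → RecursiveInOracle O g →
      RecursiveInOracle O fun n => g n >>= f
  | prec {f g} : RecursiveInOracle O f → RecursiveInOracle O g →
      RecursiveInOracle O (Nat.unpaired fun a n =>
        n.rec (f a) fun y IH => do let i ← IH; g (Nat.pair a (Nat.pair y i)))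
  | rfind {f} : RecursiveInOracle O f →
      RecursiveInOracle O fun a => Nat.rfind fun n => (fun m => m = 0) <$> f (Nat.pair a n)

/-- `A` is Turing reducible to `B`. -/
def TuringRed (A B : Set ℕ) : Prop := RecursiveInOracle (chi B) (chi A)

/-- A total function computable from the oracle `O`. -/
def ComputableInOracle (O : ℕ →. ℕ) (f : ℕ → ℕ) : Prop := RecursiveInOracle O fun n => Part.some (f n)

/-- `S` is computably enumerable in the oracle `O`. -/
def CeIn (O : ℕ →. ℕ) (S : Set ℕ) : Prop :=
  ∃ f : ℕ →. ℕ, RecursiveInOracle O f ∧ ∀ n, n ∈ S ↔ (f n).Dom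

/-- The `e`-th c.e. set. -/
def W (e : ℕ) : Set ℕ := {n | ((Denumerable.ofNat Nat.Partrec.Code e).eval n).Dom}

/-- The halting problem `∅'`. -/
def K0 : Set ℕ := {n | ((Denumerable.ofNat Nat.Partrec.Code n.unpair.1).eval n.unpair.2).Dom}

namespace RecursiveInOracle

variable {O : ℕ →. ℕ}

theorem of_partrec {f : ℕ →. ℕ} (h : Nat.Partrec f) : RecursiveInOracle O f := by
  induction h with
  | zero => exact .zero
  | succ => exact .succ
  | left => exact .left
  | right => exact .right
  | pair _ _ hf hg => exact .pair hf hg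
  | comp _ _ hf hg => exact .comp hf hg
  | prec _ _ hf hg => exact .prec hf hg
  | rfind _ hf => exact .rfind hf

theorem of_eq {f g : ℕ →. ℕ} (h : RecursiveInOracle O f) (H : ∀ n, f n = g n) :
    RecursiveInOracle O g := (funext H : f = g) ▸ h

theorem of_prim {f : ℕ → ℕ} (h : Primrec f) :
    RecursiveInOracle O (fun n => Part.some (f n)) :=
  of_partrec (Nat.Partrec.of_primrec (Primrec.nat_iff.1 h))

theorem map_prim {f : ℕ →. ℕ} {g : ℕ → ℕ} (hf : RecursiveInOracle O f) (hg : Primrec g) :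
    RecursiveInOracle O (fun n => (f n).map g) := by
  have h := RecursiveInOracle.comp (of_prim (O := O) hg) hf
  have e : (fun n => f n >>= fun x => Part.some (g x)) = fun n => (f n).map g := by
    funext n
    exact Part.bind_some_eq_map g (f n)
  rwa [show (fun n => f n >>= (fun x => Part.some (g x))) = fun n => (f n).map g from e] at h

theorem precomp_prim {f : ℕ →. ℕ} {g : ℕ → ℕ} (hf : RecursiveInOracle O f) (hg : Primrec g) :
    RecursiveInOracle O (fun n => f (g n)) := by
  have h := RecursiveInOracle.comp hf (of_prim (O := O) hg)
  exact h.of_eq fun n => Part.bind_some _ _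

theorem withIndex {f : ℕ →. ℕ} (hf : RecursiveInOracle O f) :
    RecursiveInOracle O (fun n => (f n).map (Nat.pair n)) := by
  have h := RecursiveInOracle.pair (of_prim (O := O) Primrec.id) hf
  have e : (fun n => Nat.pair <$> Part.some (id n) <*> f n) =
      (fun n => (f n).map (Nat.pair n)) := by
    funext n
    simp [Seq.seq]
  rwa [e] at h

end RecursiveInOracle

open Classical in
noncomputable def prefA (A : Set ℕ) : ℕ → ℕ
  | 0 => 0
  | (n+1) => prefA A n + (if n ∈ A then 1 else 0) * 2 ^ n

theorem prefA_lt (A : Set ℕ) : ∀ n, prefA A n < 2 ^ n := by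
  intro n
  induction n with
  | zero => simp [prefA]
  | succ n ih =>
    have h2 : 2 ^ (n + 1) = 2 ^ n + 2 ^ n := by ring
    simp only [prefA]
    split_ifs <;> omega

open Classical in
theorem prefA_bit (A : Set ℕ) {n k : ℕ} (h : n < k) :
    prefA A k / 2 ^ n % 2 = (if n ∈ A then 1 else 0) := by
  induction k with
  | zero => omega
  | succ k ih =>
    rcases Nat.lt_succ_iff_lt_or_eq.1 h with h' | h'
    · show (prefA A k + (if k ∈ A then 1 else 0) * 2 ^ k) / 2 ^ n % 2 = _
      have hk : (if k ∈ A then 1 else 0) * 2 ^ k =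
          ((if k ∈ A then 1 else 0) * 2 ^ (k - n - 1) * 2) * 2 ^ n := by
        rw [mul_assoc, mul_assoc, ← pow_succ']
        rw [← pow_add]
        congr 2
        omega
      rw [hk, Nat.add_mul_div_right _ _ (Nat.two_pow_pos n),
        Nat.add_mul_mod_self_right]
      exact ih h'
    · subst h'
      show (prefA A n + (if n ∈ A then 1 else 0) * 2 ^ n) / 2 ^ n % 2 = _
      rw [Nat.add_mul_div_right _ _ (Nat.two_pow_pos n),
        Nat.div_eq_of_lt (prefA_lt A n)]
      split_ifs <;> simp

theorem pow2_prim : Primrec (fun n : ℕ => 2 ^ n) :=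
  (Primrec.nat_iff.2 (Nat.Primrec.pow.comp
    ((Nat.Primrec.const 2).pair Nat.Primrec.id))).of_eq
    (fun n => by simp [Nat.unpaired])

theorem u1_prim : Primrec (fun n : ℕ => n.unpair.1) := Primrec.fst.comp Primrec.unpair
theorem u2_prim : Primrec (fun n : ℕ => n.unpair.2) := Primrec.snd.comp Primrec.unpair

open Classical in
theorem prefA_rec (A : Set ℕ) : RecursiveInOracle (chi A) (fun n => Part.some (prefA A n)) := by
  -- the step function
  have hpost : Primrec (fun p : ℕ =>
      p.unpair.1.unpair.2.unpair.2 + p.unpair.2 * 2 ^ p.unpair.1.unpair.2.unpair.1) := by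
    have t1 : Primrec (fun p : ℕ => p.unpair.1.unpair.2.unpair.2) :=
      u2_prim.comp (u2_prim.comp u1_prim)
    have t2 : Primrec (fun p : ℕ => p.unpair.2 * 2 ^ p.unpair.1.unpair.2.unpair.1) :=
      Primrec.nat_mul.comp u2_prim (pow2_prim.comp (u1_prim.comp (u2_prim.comp u1_prim)))
    exact Primrec.nat_add.comp t1 t2
  have g_rec : RecursiveInOracle (chi A) (fun m => Part.some
      (m.unpair.2.unpair.2 + (if m.unpair.2.unpair.1 ∈ A then 1 else 0) *
        2 ^ m.unpair.2.unpair.1)) := by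
    have h1 : RecursiveInOracle (chi A) (fun m => chi A (m.unpair.2.unpair.1)) :=
      RecursiveInOracle.precomp_prim .oracle (u1_prim.comp u2_prim)
    have h3 := RecursiveInOracle.map_prim (RecursiveInOracle.withIndex h1) hpost
    have e : (fun m => ((chi A (m.unpair.2.unpair.1)).map (Nat.pair m)).map (fun p : ℕ =>
        p.unpair.1.unpair.2.unpair.2 + p.unpair.2 * 2 ^ p.unpair.1.unpair.2.unpair.1)) =
        (fun m => Part.some (m.unpair.2.unpair.2 +
          (if m.unpair.2.unpair.1 ∈ A then 1 else 0) * 2 ^ m.unpair.2.unpair.1)) := by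
      funext m
      simp [chi, Nat.unpair_pair]
    rwa [e] at h3
  have hP := RecursiveInOracle.prec (RecursiveInOracle.zero (O := chi A)) g_rec
  have hF := RecursiveInOracle.precomp_prim hP
    (Primrec₂.natPair.comp (Primrec.const 0) Primrec.id)
  have key : ∀ n : ℕ, (Nat.unpaired fun a n =>
      n.rec ((pure 0 : ℕ →. ℕ) a) fun y IH => do
        let i ← IH
        (fun m => Part.some (m.unpair.2.unpair.2 +
          (if m.unpair.2.unpair.1 ∈ A then 1 else 0) * 2 ^ m.unpair.2.unpair.1))
          (Nat.pair a (Nat.pair y i))) (Nat.pair 0 n) = Part.some (prefA A n) := by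
    intro n
    induction n with
    | zero => simp [Nat.unpaired, Nat.unpair_pair, prefA]; rfl
    | succ n ih =>
      simp only [Nat.unpaired, Nat.unpair_pair] at ih ⊢
      show (Nat.rec ((pure 0 : ℕ →. ℕ) 0) _ n : Part ℕ) >>= _ = _
      rw [show (Nat.rec ((pure 0 : ℕ →. ℕ) 0) _ n : Part ℕ) = Part.some (prefA A n) from ih]
      simp [Nat.unpair_pair, prefA]
  exact hF.of_eq fun n => by simpa using key n

/-- The set of codes of finite prefixes of `A`. -/
def prefSet (A : Set ℕ) : Set ℕ :=
  {m | m = Nat.pair m.unpair.1 (prefA A m.unpair.1)}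

theorem mem_prefSet (A : Set ℕ) (k : ℕ) : Nat.pair k (prefA A k) ∈ prefSet A := by
  simp [prefSet, Nat.unpair_pair]

theorem prefSet_infinite (A : Set ℕ) : (prefSet A).Infinite :=
  Set.infinite_of_injective_forall_mem
    (f := fun k => Nat.pair k (prefA A k))
    (fun a b hab => by
      have := congrArg (fun m => m.unpair.1) hab
      simpa [Nat.unpair_pair] using this)
    (fun k => mem_prefSet A k)

theorem prefSet_red (A : Set ℕ) : TuringRed (prefSet A) A := by
  classical
  have hpost : Primrec (fun p : ℕ =>
      if p.unpair.1 = Nat.pair p.unpair.1.unpair.1 p.unpair.2 then 1 else 0) := by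
    exact Primrec.ite
      (Primrec.eq.comp u1_prim
        (Primrec₂.natPair.comp (u1_prim.comp u1_prim) u2_prim))
      (Primrec.const 1) (Primrec.const 0)
  have h1 : RecursiveInOracle (chi A) (fun m => Part.some (prefA A m.unpair.1)) :=
    RecursiveInOracle.precomp_prim (f := fun n => Part.some (prefA A n)) (prefA_rec A) u1_prim
  have h2 := RecursiveInOracle.map_prim (RecursiveInOracle.withIndex h1) hpost
  refine h2.of_eq fun m => ?_
  simp only [Part.map_some, Nat.unpair_pair, chi]
  congr 1
  by_cases hm : m ∈ prefSet A
  · rw [if_pos hm, if_pos]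
    exact hm
  · rw [if_neg hm, if_neg]
    exact hm

theorem prefSet_unbounded {A C : Set ℕ} (hCinf : C.Infinite) (hsub : C ⊆ prefSet A)
    (a : ℕ) : ∃ m ∈ C, a < m.unpair.1 := by
  by_contra hcon
  push_neg at hcon
  apply hCinf
  apply Set.Finite.subset ((Set.finite_Iic a).image (fun k => Nat.pair k (prefA A k)))
  intro m hm
  have hms := hsub hm
  refine ⟨m.unpair.1, hcon m hm, ?_⟩
  exact hms.symm

open Classical in
theorem immune_step (A B C : Set ℕ) (hCinf : C.Infinite) (hC : TuringRed C B)
    (hsub : C ⊆ prefSet A) : TuringRed A B := by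
  classical
  -- the search predicate
  have hQ : RecursiveInOracle (chi B) (fun k : ℕ =>
      Part.some (if k.unpair.2 ∈ C ∧ k.unpair.1 < k.unpair.2.unpair.1 then 0 else 1)) := by
    have hpost : Primrec (fun p : ℕ =>
        if p.unpair.2 = 1 ∧ p.unpair.1.unpair.1 < p.unpair.1.unpair.2.unpair.1
        then 0 else 1) := by
      exact Primrec.ite
        (PrimrecPred.and (Primrec.eq.comp u2_prim (Primrec.const 1))
          (Primrec.nat_lt.comp (u1_prim.comp u1_prim)
            (u1_prim.comp (u2_prim.comp u1_prim))))
        (Primrec.const 0) (Primrec.const 1)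
    have h1 : RecursiveInOracle (chi B) (fun k => chi C (k.unpair.2)) :=
      RecursiveInOracle.precomp_prim (f := chi C) hC u2_prim
    have h2 := RecursiveInOracle.map_prim (RecursiveInOracle.withIndex h1) hpost
    refine h2.of_eq fun k => ?_
    simp only [chi, Part.map_some, Nat.unpair_pair]
    by_cases hc : k.unpair.2 ∈ C
    · simp [hc]
    · simp [hc]
  have hR := RecursiveInOracle.rfind hQ
  have hpost4 : Primrec (fun p : ℕ => p.unpair.2.unpair.2 / 2 ^ p.unpair.1 % 2) :=
    Primrec.nat_mod.comp
      (Primrec.nat_div.comp (u2_prim.comp u2_prim) (pow2_prim.comp u1_prim))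
      (Primrec.const 2)
  have hF := RecursiveInOracle.map_prim (RecursiveInOracle.withIndex hR) hpost4
  refine hF.of_eq fun a => ?_
  -- the rfind is total
  set p : ℕ →. Bool := fun n => (fun m => m = 0) <$>
    (fun k : ℕ => Part.some
      (if k.unpair.2 ∈ C ∧ k.unpair.1 < k.unpair.2.unpair.1 then 0 else 1)) (Nat.pair a n)
    with hp
  have hpval : ∀ n, p n = Part.some
      (decide ((if n ∈ C ∧ a < n.unpair.1 then (0:ℕ) else 1) = 0)) := by
    intro n
    simp [hp, Nat.unpair_pair]
  have hdom : (Nat.rfind p).Dom := by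
    obtain ⟨n0, hn0C, hn0⟩ := prefSet_unbounded hCinf hsub a
    refine Nat.rfind_dom.2 ⟨n0, ?_, fun {m} _ => ?_⟩
    · rw [hpval n0, if_pos ⟨hn0C, hn0⟩]
      simp
    · rw [hpval m]; trivial
  set m := (Nat.rfind p).get hdom with hmdef
  have hm : m ∈ Nat.rfind p := Part.get_mem hdom
  have hspec := Nat.rfind_spec hm
  rw [hpval m] at hspec
  have hcond : m ∈ C ∧ a < m.unpair.1 := by
    by_contra hcon
    rw [if_neg hcon] at hspec
    simp at hspec
  have hmS : m = Nat.pair m.unpair.1 (prefA A m.unpair.1) := hsub hcond.1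
  have hmu2 : m.unpair.2 = prefA A m.unpair.1 := by
    conv_lhs => rw [hmS]
    rw [Nat.unpair_pair]
  have hval : (Nat.pair a m).unpair.2.unpair.2 / 2 ^ (Nat.pair a m).unpair.1 % 2 =
      (if a ∈ A then 1 else 0) := by
    rw [Nat.unpair_pair]
    simp only [hmu2]
    exact prefA_bit A hcond.2
  symm
  show chi A a = _
  rw [chi]
  refine (Part.eq_some_iff.2 ?_).symm
  rw [Part.mem_map_iff]
  refine ⟨Nat.pair a m, ?_, hval⟩
  rw [Part.mem_map_iff]
  exact ⟨m, hm, rfl⟩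


/-- Immunity Lemma: if `A ≰_T B`, then there is a set `S ≤_T A` which is immune to
`B`-computable sets: `S` is infinite and no infinite `B`-computable set is a subset of `S`. -/
theorem immunity_lemma (A B : Set ℕ) (h : ¬ TuringRed A B) :
    ∃ S : Set ℕ, TuringRed S A ∧ S.Infinite ∧
      ∀ C : Set ℕ, C.Infinite → TuringRed C B → ¬ C ⊆ S := by
  exact ⟨prefSet A, prefSet_red A, prefSet_infinite A,
    fun C hCinf hC hsub => h (immune_step A B C hCinf hC hsub)⟩
end

section
/- Let A be an infinite set such that for all e, if A ⊆ W_e then the complement of W_e is finite or W_e \ A is finite. Then A is not c.e. if and only if the complement of A is Π⁰₁-immune. -/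
namespace Thesis

/-- The `e`-th c.e. set. -/
def W (e : ℕ) : Set ℕ := {n | ((Denumerable.ofNat Nat.Partrec.Code e).eval n).Dom}

/-- `M` is computably enumerable. -/
def CE (M : Set ℕ) : Prop := ∃ e : ℕ, M = W e

/-- `S` is `Π⁰₁`-immune: it is infinite and contains no infinite co-c.e. subset. -/
def Pi01Immune (S : Set ℕ) : Prop :=
  S.Infinite ∧ ∀ e : ℕ, (W e)ᶜ ⊆ S → ((W e)ᶜ).Finite

lemma ce_of_partrec {f : ℕ →. ℕ} (hf : Nat.Partrec f) : CE {n | (f n).Dom} := by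
  obtain ⟨c, hc⟩ := Nat.Partrec.Code.exists_code.1 hf
  refine ⟨Encodable.encode c, ?_⟩
  simp [W, Denumerable.ofNat_encode, hc]

lemma primrec_mem_finset (s : Finset ℕ) : PrimrecPred (· ∈ s) := by
  classical
  induction s using Finset.induction_on with
  | empty =>
      exact (PrimrecPred.of_eq (p := fun _ : ℕ => False)
        (Primrec.const false).primrecPred (by simp))
  | @insert a s ha ih =>
      have heq : PrimrecPred (fun n : ℕ => n = a) :=
        Primrec.eq.comp Primrec.id (Primrec.const a)
      exact ((heq.or ih).of_eq (fun n => by simp [Finset.mem_insert]))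

lemma ce_dom_diff {g : ℕ →. ℕ} (hg : Partrec g) (F : Finset ℕ) :
    CE ({n | (g n).Dom} \ ↑F) := by
  classical
  have hmem : Computable fun n : ℕ => decide (n ∈ F) :=
    (primrec_mem_finset F).decide.to_comp
  have hpart : Partrec fun n : ℕ => cond (decide (n ∈ F)) Part.none (g n) :=
    Partrec.cond hmem Partrec.none hg
  have := ce_of_partrec (Partrec.nat_iff.1 hpart)
  convert this using 1
  ext n
  by_cases h : n ∈ F <;> simp [h, Part.not_none_dom]

lemma ce_compl_finset (F : Finset ℕ) : CE ((↑F : Set ℕ)ᶜ) := by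
  have := ce_dom_diff (g := fun _ : ℕ => Part.some 0)
    (Partrec.const' (Part.some 0)) F
  convert this using 1
  ext n; simp

/-- Let `A` be infinite such that whenever `A ⊆ W_e`, either `(W_e)ᶜ` is finite or
`W_e \ A` is finite.  Then `A` is not c.e. iff `Aᶜ` is `Π⁰₁`-immune. -/
theorem not_ce_iff_compl_pi01immune (A : Set ℕ) (hinf : A.Infinite)
    (hmax : ∀ e : ℕ, A ⊆ W e → ((W e)ᶜ).Finite ∨ (W e \ A).Finite) :
    ¬ CE A ↔ Pi01Immune Aᶜ := by
  constructor
  · intro hnce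
    constructor
    · -- Aᶜ infinite; otherwise A is cofinite hence c.e.
      by_contra hfin
      rw [Set.not_infinite] at hfin
      apply hnce
      have : A = ((hfin.toFinset : Finset ℕ) : Set ℕ)ᶜ := by
        ext n; simp
      rw [this]
      exact ce_compl_finset _
    · intro e hsub
      have hsub' : A ⊆ W e := by
        intro n hn
        by_contra h
        exact (hsub h) hn
      rcases hmax e hsub' with h | h
      · exact h
      · -- A = W e \ (W e \ A), c.e. minus finite is c.e.
        exfalso
        apply hnce
        have heq : A = W e \ (h.toFinset : Set ℕ) := by
          ext n
          simp only [Set.mem_diff, Set.Finite.coe_toFinset, Set.mem_diff]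
          constructor
          · intro hn
            exact ⟨hsub' hn, fun hc => hc.2 hn⟩
          · intro ⟨hW, hn⟩
            by_contra hA
            exact hn ⟨hW, hA⟩
        rw [heq]
        have hW : Partrec fun n => (Denumerable.ofNat Nat.Partrec.Code e).eval n :=
          Partrec.nat_iff.2 (Nat.Partrec.Code.exists_code.2 ⟨_, rfl⟩)
        have := ce_dom_diff hW h.toFinset
        exact this
  · rintro ⟨hAc_inf, himm⟩ ⟨e, rfl⟩
    have : ((W e)ᶜ).Finite := himm e (subset_refl _)
    exact hAc_inf this

end Thesis
end

section
/- A cohesive set is Π⁰₁-immune if and only if it is not co-c.e. (not Π⁰₁). -/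
namespace Thesis

/-- `C` is cohesive: it is infinite and no c.e. set splits it into two infinite pieces. -/
def Cohesive (C : Set ℕ) : Prop :=
  C.Infinite ∧ ∀ e : ℕ, (W e ∩ C).Finite ∨ ((W e)ᶜ ∩ C).Finite

/-- `C` is a `Π⁰₁` (co-c.e.) set. -/
def IsPi01 (C : Set ℕ) : Prop := ∃ e : ℕ, C = (W e)ᶜ

lemma finsetMem_primrec (F : Finset ℕ) : PrimrecPred (fun n : ℕ => n ∈ F) := by
  classical
  induction F using Finset.induction_on with
  | empty =>
      exact PrimrecPred.of_eq (p := fun _ : ℕ => False)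
        (Primrec.primrecPred (by simpa using (Primrec.const false : Primrec fun _ : ℕ => false))) (by simp)
  | @insert a F ha ih =>
      have h1 : PrimrecPred (fun n : ℕ => n = a) :=
        Primrec.eq.comp Primrec.id (Primrec.const a)
      exact PrimrecPred.of_eq (h1.or ih) (by simp [Finset.mem_insert])

/-- C.e. sets are closed under removing a finite set. -/
lemma exists_index_diff (e : ℕ) (F : Finset ℕ) : ∃ d : ℕ, W d = W e \ ↑F := by
  classical
  set c := (Denumerable.ofNat Nat.Partrec.Code e) with hc
  have heval : Nat.Partrec c.eval := Nat.Partrec.Code.exists_code.mpr ⟨c, rfl⟩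
  have hev : Partrec c.eval := Partrec.nat_iff.mpr heval
  have hmem : Computable (fun n : ℕ => decide (n ∈ F)) :=
    (finsetMem_primrec F).decide.to_comp
  have hf : Partrec (fun n : ℕ => cond (decide (n ∈ F)) Part.none (c.eval n)) :=
    Partrec.cond hmem Partrec.none hev
  obtain ⟨d, hd⟩ := Nat.Partrec.Code.exists_code.mp (Partrec.nat_iff.mp hf)
  refine ⟨Encodable.encode d, ?_⟩
  ext n
  simp only [W, Set.mem_setOf_eq, Set.mem_diff, Denumerable.ofNat_encode, hd, ← hc]
  by_cases hn : n ∈ F <;> simp [hn]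

/-- A cohesive set is `Π⁰₁`-immune iff it is not co-c.e. -/
theorem cohesive_pi01immune_iff_not_pi01 (C : Set ℕ) (hC : Cohesive C) :
    Pi01Immune C ↔ ¬ IsPi01 C := by
  obtain ⟨hCinf, hcoh⟩ := hC
  constructor
  · rintro ⟨-, himm⟩ ⟨e, rfl⟩
    exact hCinf (himm e subset_rfl)
  · intro hnot
    refine ⟨hCinf, fun e hsub => ?_⟩
    by_contra hinf
    have hFin : (W e ∩ C).Finite := by
      rcases hcoh e with h | h
      · exact h
      · exact absurd (by rwa [Set.inter_eq_left.mpr hsub] at h) hinf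
    obtain ⟨d, hd⟩ := exists_index_diff e hFin.toFinset
    apply hnot
    refine ⟨d, ?_⟩
    rw [hd]
    ext n
    simp only [Set.mem_diff, Set.mem_compl_iff, Set.Finite.coe_toFinset, Set.mem_inter_iff, W,
      Set.mem_setOf_eq]
    by_cases hW : ((Denumerable.ofNat Nat.Partrec.Code e).eval n).Dom
    · tauto
    · have hc := hsub hW
      tauto

end Thesis
end

section
/- There is a Δ⁰₂ dense immune set A whose complement is Π⁰₁-immune: namely, if f is a ∅'-computable function dominating every computable function with f(n+1) > f(n) > n for all n, then A = {p_{ω\W_e}(f(e)) : |ω \ W_e| ≥ f(e)} is Δ⁰₂, its principal function dominates every computable function, and ω \ A contains no infinite Π⁰₁ set. -/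
/-- `S` is `Π⁰₁`-immune: it is infinite and contains no infinite co-c.e. subset. -/
def Pi01Immune (S : Set ℕ) : Prop :=
  S.Infinite ∧ ∀ e : ℕ, (W e)ᶜ ⊆ S → ((W e)ᶜ).Finite

theorem RecursiveInOracle.of_eq_s10 {O f g : ℕ →. ℕ} (h : RecursiveInOracle O f) (H : ∀ n, f n = g n) :
    RecursiveInOracle O g := (funext H : f = g) ▸ h

theorem RecursiveInOracle.of_natPartrec {O : ℕ →. ℕ} {g : ℕ →. ℕ} (h : Nat.Partrec g) :
    RecursiveInOracle O g := by
  induction h with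
  | zero => exact .zero
  | succ => exact .succ
  | left => exact .left
  | right => exact .right
  | pair _ _ ih1 ih2 => exact .pair ih1 ih2
  | comp _ _ ih1 ih2 => exact .comp ih1 ih2
  | prec _ _ ih1 ih2 => exact .prec ih1 ih2
  | rfind _ ih => exact .rfind ih

theorem RecursiveInOracle.of_computable {O : ℕ →. ℕ} {g : ℕ → ℕ} (h : Computable g) :
    RecursiveInOracle O (fun n => Part.some (g n)) :=
  RecursiveInOracle.of_natPartrec (Partrec.nat_iff.1 h)

theorem RecursiveInOracle.totalComp {O F : ℕ →. ℕ} {h : ℕ → ℕ} (hF : RecursiveInOracle O F)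
    (hh : Computable h) : RecursiveInOracle O (fun n => F (h n)) :=
  (RecursiveInOracle.comp hF (RecursiveInOracle.of_computable hh)).of_eq_s10 fun n => by exact Part.bind_some _ _

theorem RecursiveInOracle.postComp {O F : ℕ →. ℕ} {h : ℕ → ℕ} (hh : Computable h)
    (hF : RecursiveInOracle O F) : RecursiveInOracle O (fun n => (F n).map h) :=
  (RecursiveInOracle.comp (RecursiveInOracle.of_computable hh) hF).of_eq_s10 fun n => by
    rw [← Part.bind_some_eq_map]; rfl

theorem RecursiveInOracle.totalPair {O : ℕ →. ℕ} {u v : ℕ → ℕ}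
    (hu : RecursiveInOracle O (fun n => Part.some (u n))) (hv : RecursiveInOracle O (fun n => Part.some (v n))) :
    RecursiveInOracle O (fun n => Part.some (Nat.pair (u n) (v n))) :=
  (RecursiveInOracle.pair hu hv).of_eq_s10 fun n => by simp [Seq.seq]

/-- Course-of-values encoding. -/
def cov (u : ℕ → ℕ) (n : ℕ) : ℕ := Encodable.encode ((List.range n).map u)

def covStep (y : ℕ) : ℕ :=
  Encodable.encode
    (((Encodable.decode y.unpair.1.unpair.2.unpair.2 : Option (List ℕ)).getD []) ++ [y.unpair.2])

theorem covStep_primrec : Primrec covStep := by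
  unfold covStep
  exact Primrec.encode.comp
    (Primrec.list_append.comp
      ((Primrec.option_getD.comp
        (Primrec.decode.comp <| Primrec.snd.comp <| Primrec.unpair.comp <|
          Primrec.snd.comp <| Primrec.unpair.comp <| Primrec.fst.comp Primrec.unpair)
        (Primrec.const [])))
      (Primrec.list_cons.comp (Primrec.snd.comp Primrec.unpair) (Primrec.const [])))

theorem RecursiveInOracle.cov' {O : ℕ →. ℕ} {u : ℕ → ℕ}
    (hu : RecursiveInOracle O (fun n => Part.some (u n))) :
    RecursiveInOracle O (fun n => Part.some (cov u n)) := by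
  have hG1 : RecursiveInOracle O (fun x => Part.some (Nat.pair x (u x.unpair.2.unpair.1))) :=
    RecursiveInOracle.totalPair (RecursiveInOracle.of_computable Computable.id)
      (hu.totalComp ((Computable.fst.comp Computable.unpair).comp
        (Computable.snd.comp Computable.unpair)))
  have hG : RecursiveInOracle O (fun x => Part.some (covStep (Nat.pair x (u x.unpair.2.unpair.1)))) :=
    (RecursiveInOracle.comp (RecursiveInOracle.of_computable covStep_primrec.to_comp) hG1).of_eq_s10
      fun n => by simp
  have hP := RecursiveInOracle.prec (f := fun _ => Part.some (Encodable.encode ([] : List ℕ)))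
    (g := fun x => Part.some (covStep (Nat.pair x (u x.unpair.2.unpair.1))))
    (RecursiveInOracle.of_computable (Computable.const _)) hG
  have key : ∀ n : ℕ,
      (Nat.unpaired fun a n =>
        n.rec (Part.some (Encodable.encode ([] : List ℕ)))
          (fun y IH => do
            let i ← IH
            Part.some (covStep (Nat.pair (Nat.pair a (Nat.pair y i))
              (u ((Nat.pair a (Nat.pair y i)).unpair.2.unpair.1)))))) (Nat.pair 0 n)
        = Part.some (cov u n) := by
    intro n
    induction n with
    | zero => simp [Nat.unpaired, cov]
    | succ n ih =>
      simp only [Nat.unpaired, Nat.unpair_pair] at ih ⊢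
      rw [ih]
      simp [covStep, cov, Encodable.encodek, List.range_succ]
  exact (hP.totalComp (Primrec₂.natPair.comp (Primrec.const 0) Primrec.id).to_comp).of_eq_s10
    fun n => key n

theorem RecursiveInOracle.covComp {O : ℕ →. ℕ} {u1 u2 : ℕ → ℕ} {b H : ℕ → ℕ}
    (h1 : RecursiveInOracle O (fun n => Part.some (u1 n)))
    (h2 : RecursiveInOracle O (fun n => Part.some (u2 n)))
    (hb : Computable b) (hH : Computable H) :
    RecursiveInOracle O (fun m => Part.some (H (Nat.pair m (Nat.pair (cov u1 (b m)) (cov u2 (b m)))))) := by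
  have hc1 : RecursiveInOracle O (fun m => Part.some (cov u1 (b m))) := h1.cov'.totalComp hb
  have hc2 : RecursiveInOracle O (fun m => Part.some (cov u2 (b m))) := h2.cov'.totalComp hb
  have hp : RecursiveInOracle O (fun m => Part.some (Nat.pair m (Nat.pair (cov u1 (b m)) (cov u2 (b m))))) :=
    RecursiveInOracle.totalPair (RecursiveInOracle.of_computable Computable.id) (hc1.totalPair hc2)
  exact (RecursiveInOracle.comp (RecursiveInOracle.of_computable hH) hp).of_eq_s10 fun n => by simp

/-- decode a list of naturals from its code -/
def dList (t : ℕ) : List ℕ := (Encodable.decode t : Option (List ℕ)).getD []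

theorem dList_primrec : Primrec dList :=
  Primrec.option_getD.comp Primrec.decode (Primrec.const [])

def lookup (t k : ℕ) : ℕ := (dList t).getD k 1

def cntBelow (t e m : ℕ) : ℕ :=
  ((List.range m).filterMap fun n => if lookup t (Nat.pair e n) = 0 then some n else none).length

def testList (t1 t2 m : ℕ) : List ℕ :=
  (List.range m).filterMap fun e =>
    if lookup t2 (Nat.pair e m) = 0 ∧ cntBelow t2 e m = (dList t1).getD e 0 then some e else none

def Hfun (c : ℕ) (x : ℕ) : ℕ :=
  if x.unpair.1 = 0 then c
  else if 0 < (testList x.unpair.2.unpair.1 x.unpair.2.unpair.2 x.unpair.1).length then 1 else 0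

theorem cntBelow_primrec : Primrec fun q : ℕ × ℕ × ℕ => cntBelow q.1 q.2.1 q.2.2 := by
  have hlook : Primrec fun z : (ℕ × ℕ × ℕ) × ℕ => lookup z.1.1 (Nat.pair z.1.2.1 z.2) :=
    (Primrec.list_getD 1).comp (dList_primrec.comp (Primrec.fst.comp Primrec.fst))
      (Primrec₂.natPair.comp (Primrec.fst.comp (Primrec.snd.comp Primrec.fst)) Primrec.snd)
  exact Primrec.list_length.comp <|
    Primrec.listFilterMap (Primrec.list_range.comp (Primrec.snd.comp Primrec.snd)) <|
      Primrec.ite (Primrec.eq.comp hlook (Primrec.const 0))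
        (Primrec.option_some.comp Primrec.snd) (Primrec.const none)

theorem testList_primrec : Primrec fun q : ℕ × ℕ × ℕ => testList q.1 q.2.1 q.2.2 := by
  have hlook : Primrec fun z : (ℕ × ℕ × ℕ) × ℕ => lookup z.1.2.1 (Nat.pair z.2 z.1.2.2) :=
    (Primrec.list_getD 1).comp
      (dList_primrec.comp (Primrec.fst.comp (Primrec.snd.comp Primrec.fst)))
      (Primrec₂.natPair.comp Primrec.snd (Primrec.snd.comp (Primrec.snd.comp Primrec.fst)))
  have hcnt : Primrec fun z : (ℕ × ℕ × ℕ) × ℕ => cntBelow z.1.2.1 z.2 z.1.2.2 :=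
    cntBelow_primrec.comp <|
      Primrec.pair (Primrec.fst.comp (Primrec.snd.comp Primrec.fst))
        (Primrec.pair Primrec.snd (Primrec.snd.comp (Primrec.snd.comp Primrec.fst)))
  have hgetD : Primrec fun z : (ℕ × ℕ × ℕ) × ℕ => (dList z.1.1).getD z.2 0 :=
    (Primrec.list_getD 0).comp (dList_primrec.comp (Primrec.fst.comp Primrec.fst)) Primrec.snd
  exact Primrec.listFilterMap (Primrec.list_range.comp (Primrec.snd.comp Primrec.snd)) <|
    Primrec.ite
      ((Primrec.eq.comp hlook (Primrec.const 0)).and (Primrec.eq.comp hcnt hgetD))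
      (Primrec.option_some.comp Primrec.snd) (Primrec.const none)

theorem Hfun_primrec (c : ℕ) : Primrec (Hfun c) := by
  have hm : Primrec fun x : ℕ => x.unpair.1 := Primrec.fst.comp Primrec.unpair
  have ht1 : Primrec fun x : ℕ => x.unpair.2.unpair.1 :=
    Primrec.fst.comp (Primrec.unpair.comp (Primrec.snd.comp Primrec.unpair))
  have ht2 : Primrec fun x : ℕ => x.unpair.2.unpair.2 :=
    Primrec.snd.comp (Primrec.unpair.comp (Primrec.snd.comp Primrec.unpair))
  have htest : Primrec fun x : ℕ =>
      (testList x.unpair.2.unpair.1 x.unpair.2.unpair.2 x.unpair.1).length :=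
    Primrec.list_length.comp (testList_primrec.comp (ht1.pair (ht2.pair hm)))
  exact Primrec.ite (Primrec.eq.comp hm (Primrec.const 0)) (Primrec.const c)
    (Primrec.ite (Primrec.nat_lt.comp (Primrec.const 0) htest) (Primrec.const 1) (Primrec.const 0))


theorem pair_le_pair_diag {a b c : ℕ} (ha : a ≤ c) (hb : b ≤ c) :
    Nat.pair a b ≤ Nat.pair c c := by
  unfold Nat.pair
  simp only [Nat.lt_irrefl, if_false]
  split_ifs with h1
  · nlinarith
  · nlinarith

theorem cov_getD {u : ℕ → ℕ} {N k : ℕ} (h : k < N) (d : ℕ) :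
    (dList (cov u N)).getD k d = u k := by
  simp [dList, cov, Encodable.encodek, List.getD_eq_getElem?_getD, h]

theorem lookup_cov {u : ℕ → ℕ} {N k : ℕ} (h : k < N) : lookup (cov u N) k = u k :=
  cov_getD h 1

open Classical in
theorem filterMap_if_length {Q : ℕ → Prop} [DecidablePred Q] (l : List ℕ) :
    (l.filterMap fun n => if Q n then some n else none).length = l.countP fun n => decide (Q n) := by
  induction l with
  | nil => simp
  | cons a l ih => by_cases h : Q a <;> simp [List.filterMap_cons, h, ih, List.countP_cons]

open Classical in
noncomputable def chif (S : Set ℕ) : ℕ → ℕ := fun n => if n ∈ S then 1 else 0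

theorem chi_eq_chif (S : Set ℕ) : chi S = fun n => Part.some (chif S n) := rfl

theorem chif_eq_zero_iff {S : Set ℕ} {n : ℕ} : chif S n = 0 ↔ n ∉ S := by
  by_cases h : n ∈ S <;> simp [chif, h]

theorem mem_K0_pair {e n : ℕ} : Nat.pair e n ∈ K0 ↔ n ∈ W e := by
  simp [K0, W, Nat.unpair_pair]

open Classical in
theorem Hfun_spec (f : ℕ → ℕ) (c m : ℕ) (hm : m ≠ 0) :
    Hfun c (Nat.pair m (Nat.pair (cov f (Nat.pair m m + 1)) (cov (chif K0) (Nat.pair m m + 1)))) =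
      if ∃ e, e < m ∧ m ∈ (W e)ᶜ ∧ Nat.count (· ∈ (W e)ᶜ) m = f e then 1 else 0 := by
  set N := Nat.pair m m + 1 with hN
  have hNe : ∀ {e n : ℕ}, e ≤ m → n ≤ m → Nat.pair e n < N := fun he hn =>
    Nat.lt_succ_of_le (pair_le_pair_diag he hn)
  have hlk : ∀ {e n : ℕ}, e ≤ m → n ≤ m →
      (lookup (cov (chif K0) N) (Nat.pair e n) = 0 ↔ n ∈ (W e)ᶜ) := by
    intro e n he hn
    rw [lookup_cov (hNe he hn), chif_eq_zero_iff, mem_K0_pair]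
    rfl
  have hcnt : ∀ {e : ℕ}, e ≤ m →
      cntBelow (cov (chif K0) N) e m = Nat.count (· ∈ (W e)ᶜ) m := by
    intro e he
    unfold cntBelow
    rw [List.filterMap_congr (g := fun n => if n ∈ (W e)ᶜ then some n else none) ?_]
    · rw [filterMap_if_length]
      rfl
    · intro n hn
      have hnm : n < m := List.mem_range.1 hn
      exact if_congr (hlk he hnm.le) rfl rfl
  have hC : ∀ e, e < m →
      ((lookup (cov (chif K0) N) (Nat.pair e m) = 0 ∧
          cntBelow (cov (chif K0) N) e m = (dList (cov f N)).getD e 0)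
        ↔ (m ∈ (W e)ᶜ ∧ Nat.count (· ∈ (W e)ᶜ) m = f e)) := by
    intro e he
    have heN : e < N := lt_of_le_of_lt (le_trans he.le (Nat.left_le_pair m m)) (Nat.lt_succ_self _)
    rw [hlk he.le le_rfl, hcnt he.le, cov_getD heN]
  unfold Hfun
  simp only [Nat.unpair_pair]
  rw [if_neg hm]
  refine if_congr ?_ rfl rfl
  unfold testList
  constructor
  · intro h
    obtain ⟨b, hb⟩ := List.exists_mem_of_length_pos h
    obtain ⟨e, hel, hee⟩ := List.mem_filterMap.1 hb
    have hem : e < m := List.mem_range.1 hel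
    by_cases hc : lookup (cov (chif K0) N) (Nat.pair e m) = 0 ∧
        cntBelow (cov (chif K0) N) e m = (dList (cov f N)).getD e 0
    · exact ⟨e, hem, (hC e hem).1 hc⟩
    · rw [if_neg hc] at hee; exact absurd hee (by simp)
  · rintro ⟨e, hem, hprop⟩
    have : (e : ℕ) ∈ (List.range m).filterMap fun e =>
        if lookup (cov (chif K0) N) (Nat.pair e m) = 0 ∧
            cntBelow (cov (chif K0) N) e m = (dList (cov f N)).getD e 0
        then some e else none :=
      List.mem_filterMap.2 ⟨e, List.mem_range.2 hem, by rw [if_pos ((hC e hem).2 hprop)]⟩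
    exact List.length_pos_iff.2 (List.ne_nil_of_mem this)

open Classical in
theorem mem_A_iff (f : ℕ → ℕ) (hfmono : ∀ n : ℕ, n < f n ∧ f n < f (n + 1)) (m : ℕ) (hm : m ≠ 0) :
    (∃ e : ℕ, (((W e)ᶜ).Infinite ∨ f e ≤ ((W e)ᶜ).ncard) ∧ m = Nat.nth (· ∈ (W e)ᶜ) (f e))
    ↔ ∃ e, e < m ∧ m ∈ (W e)ᶜ ∧ Nat.count (· ∈ (W e)ᶜ) m = f e := by
  constructor
  · rintro ⟨e, hcond, hme⟩
    set p : ℕ → Prop := (· ∈ (W e)ᶜ) with hp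
    have hset : setOf p = (W e)ᶜ := Set.setOf_mem_eq
    have hcards : ∀ hf : (setOf p).Finite, hf.toFinset.card = ((W e)ᶜ).ncard := by
      intro hf
      rw [← hset, Set.ncard_eq_toFinset_card _ hf]
    have h' : ∀ hf : (setOf p).Finite, f e < hf.toFinset.card := by
      intro hf
      rcases hcond with hinf | hcard
      · exact absurd hf (by rw [hset]; exact hinf)
      · rcases lt_or_eq_of_le hcard with hlt | heq
        · rw [hcards hf]; exact hlt
        · exfalso
          apply hm
          rw [hme, Nat.nth_of_card_le hf]
          exact ((hcards hf).trans heq.symm).le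
    refine ⟨e, ?_, ?_, ?_⟩
    · calc e < f e := (hfmono e).1
        _ ≤ Nat.nth p (f e) := Nat.le_nth h'
        _ = m := hme.symm
    · rw [hme]; exact Nat.nth_mem (f e) h'
    · rw [hme, Nat.count_nth h']
  · rintro ⟨e, _, hpm, hcount⟩
    set p : ℕ → Prop := (· ∈ (W e)ᶜ) with hp
    have hset : setOf p = (W e)ᶜ := Set.setOf_mem_eq
    refine ⟨e, ?_, ?_⟩
    · by_cases hinf : ((W e)ᶜ).Infinite
      · exact Or.inl hinf
      · right
        have hfin : ((W e)ᶜ).Finite := Set.not_infinite.mp hinf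
        have hfinp : (setOf p).Finite := by rw [hset]; exact hfin
        have h1 : Nat.count p (m + 1) = f e + 1 := by
          rw [Nat.count_succ, if_pos hpm, hcount]
        have h2 : Nat.count p (m + 1) ≤ hfinp.toFinset.card := Nat.count_le_card hfinp (m + 1)
        have h3 : hfinp.toFinset.card = ((W e)ᶜ).ncard := by
          rw [← hset, Set.ncard_eq_toFinset_card _ hfinp]
        omega
    · rw [← hcount, Nat.nth_count hpm]

theorem exists_empty_W : ∃ g : ℕ → ℕ, Function.Injective g ∧ ∀ k, W (g k) = ∅ := by
  obtain ⟨c, hc⟩ := Nat.Partrec.Code.exists_code.1 Nat.Partrec.none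
  refine ⟨fun k => Encodable.encode (c.comp (Nat.Partrec.Code.const k)), ?_, ?_⟩
  · intro a b hab
    have h2 : c.comp (Nat.Partrec.Code.const a) = c.comp (Nat.Partrec.Code.const b) :=
      Encodable.encode_injective hab
    injection h2 with h3 h4
    exact Nat.Partrec.Code.const_inj h4
  · intro k
    ext n
    simp only [W, Set.mem_setOf_eq, Set.mem_empty_iff_false, iff_false]
    rw [Denumerable.ofNat_encode]
    simp [Nat.Partrec.Code.eval, Nat.Partrec.Code.eval_const, hc]

open Classical in
theorem A_infinite (f : ℕ → ℕ) (hfmono : ∀ n : ℕ, n < f n ∧ f n < f (n + 1)) (A : Set ℕ)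
    (hA : A = {m | ∃ e : ℕ, (((W e)ᶜ).Infinite ∨ f e ≤ ((W e)ᶜ).ncard) ∧
        m = Nat.nth (· ∈ (W e)ᶜ) (f e)}) : A.Infinite := by
  obtain ⟨g, hginj, hgW⟩ := exists_empty_W
  have hfstrict : StrictMono f := strictMono_nat_of_lt_succ fun n => (hfmono n).2
  apply Set.infinite_of_injective_forall_mem (f := fun k => f (g k))
    (hi := hfstrict.injective.comp hginj)
  intro k
  rw [hA]
  refine ⟨g k, ?_, ?_⟩
  · left; rw [hgW k, Set.compl_empty]; exact Set.infinite_univ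
  · rw [Nat.nth_of_forall (fun n' _ => by rw [hgW k]; simp)]

open Classical in
theorem element_form (f : ℕ → ℕ) (A : Set ℕ)
    (hA : A = {m | ∃ e : ℕ, (((W e)ᶜ).Infinite ∨ f e ≤ ((W e)ᶜ).ncard) ∧
        m = Nat.nth (· ∈ (W e)ᶜ) (f e)}) :
    ∀ x ∈ A, x ≠ 0 → ∃ e, x = Nat.nth (· ∈ (W e)ᶜ) (f e) ∧ f e ≤ x := by
  intro x hx hx0
  rw [hA] at hx
  obtain ⟨e, hcond, hxe⟩ := hx
  refine ⟨e, hxe, ?_⟩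
  set p : ℕ → Prop := (· ∈ (W e)ᶜ) with hp
  have hset : setOf p = (W e)ᶜ := Set.setOf_mem_eq
  have h' : ∀ hf : (setOf p).Finite, f e < hf.toFinset.card := by
    intro hf
    have hcards : hf.toFinset.card = ((W e)ᶜ).ncard := by
      rw [← hset, Set.ncard_eq_toFinset_card _ hf]
    rcases hcond with hinf | hcard
    · exact absurd hf (by rw [hset]; exact hinf)
    · rcases lt_or_eq_of_le hcard with hlt | heq
      · rw [hcards]; exact hlt
      · exfalso; apply hx0; rw [hxe, Nat.nth_of_card_le hf (hcards.trans heq.symm).le]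
  rw [hxe]; exact Nat.le_nth h'

open Classical in
theorem f_le_nth_A (f : ℕ → ℕ) (hfmono : ∀ n : ℕ, n < f n ∧ f n < f (n + 1)) (A : Set ℕ)
    (hA : A = {m | ∃ e : ℕ, (((W e)ᶜ).Infinite ∨ f e ≤ ((W e)ᶜ).ncard) ∧
        m = Nat.nth (· ∈ (W e)ᶜ) (f e)})
    (hAinf : A.Infinite) : ∀ n, f n ≤ Nat.nth (· ∈ A) (n + 1) := by
  intro n
  by_contra hlt'
  push_neg at hlt'
  set pA : ℕ → Prop := (· ∈ A) with hpA
  have hsetA : setOf pA = A := Set.setOf_mem_eq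
  have hinf : (setOf pA).Infinite := by rw [hsetA]; exact hAinf
  set F : ℕ → ℕ := fun e => Nat.nth (· ∈ (W e)ᶜ) (f e) with hF
  have hfstrict : StrictMono f := strictMono_nat_of_lt_succ fun k => (hfmono k).2
  have hsub : (Finset.range (n + 2)).image (Nat.nth pA) ⊆
      insert 0 ((Finset.range n).image F) := by
    intro x hx
    simp only [Finset.mem_image, Finset.mem_range] at hx
    obtain ⟨i, hi, hix⟩ := hx
    by_cases hx0 : x = 0
    · simp [hx0]
    · have hxA : x ∈ A := by
        rw [← hsetA]; rw [← hix]; exact Nat.nth_mem_of_infinite hinf i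
      obtain ⟨e, hxe, hfe⟩ := element_form f A hA x hxA hx0
      have hxm : x ≤ Nat.nth pA (n + 1) := by
        rw [← hix]; exact Nat.nth_monotone hinf (by omega)
      have hflt : f e < f n := lt_of_le_of_lt (le_trans hfe hxm) hlt'
      have hen : e < n := hfstrict.lt_iff_lt.mp hflt
      exact Finset.mem_insert.2 (Or.inr (Finset.mem_image.2 ⟨e, Finset.mem_range.2 hen, hxe.symm⟩))
  have hcard1 : ((Finset.range (n + 2)).image (Nat.nth pA)).card = n + 2 := by
    rw [Finset.card_image_of_injective _ (Nat.nth_injective hinf), Finset.card_range]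
  have hle := Finset.card_le_card hsub
  have hcard2 : (insert 0 ((Finset.range n).image F)).card ≤ n + 1 := by
    refine le_trans (Finset.card_insert_le _ _) ?_
    have h3 := Finset.card_image_le (s := Finset.range n) (f := F)
    simp only [Finset.card_range] at h3
    omega
  omega

open Classical in
theorem count_add_count_not (p : ℕ → Prop) (x : ℕ) :
    Nat.count p x + Nat.count (fun n => ¬ p n) x = x := by
  induction x with
  | zero => simp
  | succ n ih =>
    rw [Nat.count_succ, Nat.count_succ]
    by_cases h : p n <;> simp [h] <;> omega


set_option maxHeartbeats 1000000 in
open Classical in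
/-- If `f` is `∅'`-computable, dominates every computable function, and satisfies
`f(n+1) > f(n) > n`, then `A = {p_{ω∖W_e}(f(e)) : |ω∖W_e| ≥ f(e)}` is a `Δ⁰₂` dense
immune set whose complement is `Π⁰₁`-immune. -/
theorem delta02_dense_immune_with_pi01immune_complement
    (f : ℕ → ℕ) (hfK0 : ComputableInOracle (chi K0) f)
    (hfdom : ∀ g : ℕ → ℕ, Computable g → ∀ᶠ n in Filter.atTop, g n < f n)
    (hfmono : ∀ n : ℕ, n < f n ∧ f n < f (n + 1))
    (A : Set ℕ)
    (hA : A = {m | ∃ e : ℕ, (((W e)ᶜ).Infinite ∨ f e ≤ ((W e)ᶜ).ncard) ∧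
        m = Nat.nth (· ∈ (W e)ᶜ) (f e)}) :
    TuringRed A K0 ∧
      (∀ g : ℕ → ℕ, Computable g → ∀ᶠ n in Filter.atTop, g n < Nat.nth (· ∈ A) n) ∧
      Pi01Immune Aᶜ := by
  have hAinf : A.Infinite := A_infinite f hfmono A hA
  have hnth := f_le_nth_A f hfmono A hA hAinf
  have hsetA : setOf (· ∈ A) = A := Set.setOf_mem_eq
  have hAinf' : (setOf (· ∈ A)).Infinite := by rw [hsetA]; exact hAinf
  -- Part 2 first (reused in part 3)
  have part2 : ∀ g : ℕ → ℕ, Computable g → ∀ᶠ n in Filter.atTop, g n < Nat.nth (· ∈ A) n := by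
    intro g hg
    obtain ⟨N, hN⟩ := Filter.eventually_atTop.1 (hfdom (fun n => g (n + 1)) (hg.comp Computable.succ))
    refine Filter.eventually_atTop.2 ⟨N + 1, fun n hn => ?_⟩
    have h1 : n - 1 + 1 = n := by omega
    calc g n = g ((n - 1) + 1) := by rw [h1]
      _ < f (n - 1) := hN _ (by omega)
      _ ≤ Nat.nth (· ∈ A) ((n - 1) + 1) := hnth _
      _ = Nat.nth (· ∈ A) n := by rw [h1]
  refine ⟨?_, part2, ?_, ?_⟩
  · -- Turing reducibility
    set c : ℕ := chif A 0 with hc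
    have h2 : RecursiveInOracle (chi K0) (fun n => Part.some (chif K0 n)) := by
      rw [← chi_eq_chif]; exact RecursiveInOracle.oracle
    have hb : Computable (fun m : ℕ => Nat.pair m m + 1) :=
      (Primrec.succ.comp (Primrec₂.natPair.comp Primrec.id Primrec.id)).to_comp
    have hmain := RecursiveInOracle.covComp (O := chi K0) (u1 := f) (u2 := chif K0)
      (b := fun m => Nat.pair m m + 1) (H := Hfun c) hfK0 h2 hb (Hfun_primrec c).to_comp
    show RecursiveInOracle (chi K0) (chi A)
    rw [chi_eq_chif A]
    refine hmain.of_eq_s10 fun m => ?_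
    congr 1
    rcases Nat.eq_zero_or_pos m with hm0 | hmpos
    · subst hm0
      simp [Hfun, hc]
    · have hm : m ≠ 0 := Nat.pos_iff_ne_zero.mp hmpos
      rw [Hfun_spec f c m hm]
      have hiff := (mem_A_iff f hfmono m hm).symm
      have hmem : (m ∈ A) ↔ (∃ e : ℕ, (((W e)ᶜ).Infinite ∨ f e ≤ ((W e)ᶜ).ncard) ∧
          m = Nat.nth (· ∈ (W e)ᶜ) (f e)) := by rw [hA]; rfl
      rw [chif]
      exact (if_congr (by rw [hmem]; exact (mem_A_iff f hfmono m hm)) rfl rfl).symm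
  · -- Aᶜ infinite
    by_contra hfin'
    have hfin : Aᶜ.Finite := Set.not_infinite.mp hfin'
    have hfinp : (setOf fun n => ¬ (n ∈ A)).Finite := hfin
    set K := hfinp.toFinset.card with hK
    have hub : ∀ n, Nat.nth (· ∈ A) n ≤ n + K := by
      intro n
      have hcnot : Nat.count (fun n => ¬ (n ∈ A)) (n + K + 1) ≤ K :=
        Nat.count_le_card hfinp _
      have hcc := count_add_count_not (· ∈ A) (n + K + 1)
      have hcount : n < Nat.count (· ∈ A) (n + K + 1) := by omega
      have := Nat.nth_lt_of_lt_count hcount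
      omega
    have hcomp : Computable (fun n : ℕ => n + K) :=
      (Primrec.nat_add.comp Primrec.id (Primrec.const K)).to_comp
    obtain ⟨n, hn⟩ := (part2 _ hcomp).exists
    exact absurd (hub n) (by omega)
  · -- no infinite co-c.e. subset
    intro e hsub
    by_contra hinf
    have hinf' : ((W e)ᶜ).Infinite := hinf
    have hsetp : setOf (· ∈ (W e)ᶜ) = (W e)ᶜ := Set.setOf_mem_eq
    have hmemA : Nat.nth (· ∈ (W e)ᶜ) (f e) ∈ A := by
      rw [hA]; exact ⟨e, Or.inl hinf', rfl⟩
    have hmemc : Nat.nth (· ∈ (W e)ᶜ) (f e) ∈ (W e)ᶜ :=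
      Nat.nth_mem_of_infinite hinf' _
    exact (hsub hmemc) hmemA
end

section
/- If B ⊆ A are c.e. sets with A non-computable, then A \ B is Π⁰₁-immune if and only if B is a major subset of A. -/
namespace Thesis

/-- `X ⊆* Y`: `X` is included in `Y` up to a finite set. -/
def AlmostSubset (X Y : Set ℕ) : Prop := (X \ Y).Finite

/-- For c.e. sets `B ⊆ A`, `B` is a major subset of `A`. -/
def MajorSubset (B A : Set ℕ) : Prop :=
  (A \ B).Infinite ∧ ∀ e : ℕ, AlmostSubset Aᶜ (W e) → AlmostSubset Bᶜ (W e)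

lemma W_partrec (e : ℕ) : Nat.Partrec ((Denumerable.ofNat Nat.Partrec.Code e).eval) :=
  Nat.Partrec.Code.exists_code.2 ⟨_, rfl⟩

lemma ce_partrec {M : Set ℕ} (h : CE M) : ∃ f : ℕ →. ℕ, Nat.Partrec f ∧ M = {n | (f n).Dom} := by
  obtain ⟨e, rfl⟩ := h
  exact ⟨_, W_partrec e, rfl⟩

lemma ce_union {M N : Set ℕ} (hM : CE M) (hN : CE N) : CE (M ∪ N) := by
  obtain ⟨f, hf, rfl⟩ := ce_partrec hM
  obtain ⟨g, hg, rfl⟩ := ce_partrec hN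
  obtain ⟨h, hh, H⟩ := Nat.Partrec.merge' hf hg
  have := ce_of_partrec hh
  convert this using 1
  ext n
  simp [Set.mem_union, (H n).2]

lemma ce_insert {M : Set ℕ} (a : ℕ) (hM : CE M) : CE (insert a M) := by
  obtain ⟨g, hg, rfl⟩ := ce_partrec hM
  have hc : Computable fun n : ℕ => decide (n = a) :=
    (PrimrecPred.decide (Primrec.eq.comp .id (.const a))).to_comp
  have hp : Partrec fun n : ℕ => cond (decide (n = a)) (Part.some 0) (g n) :=
    Partrec.cond hc (Computable.const 0).partrec (Partrec.nat_iff.2 hg)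
  have := ce_of_partrec (Partrec.nat_iff.1 hp)
  convert this using 1
  ext n
  by_cases h : n = a <;> simp [h]

lemma ce_union_finite {M F : Set ℕ} (hM : CE M) (hF : F.Finite) : CE (M ∪ F) := by
  refine Set.Finite.induction_on (motive := fun F _ => CE (M ∪ F)) F hF (by simpa using hM) ?_
  intro a s _ _ ih
  rw [Set.union_insert]
  exact ce_insert _ ih

/-- If `B ⊆ A` are c.e. sets with `A` non-computable, then `A \ B` is `Π⁰₁`-immune iff
`B` is a major subset of `A`. -/
theorem diff_pi01immune_iff_major (A B : Set ℕ) (hA : CE A) (hB : CE B) (hBA : B ⊆ A)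
    (hnc : ¬ ComputablePred (· ∈ A)) :
    Pi01Immune (A \ B) ↔ MajorSubset B A := by
  constructor
  · rintro ⟨hinf, himm⟩
    refine ⟨hinf, fun e he => ?_⟩
    set F : Set ℕ := Aᶜ \ W e with hF
    have hFfin : F.Finite := he
    -- the c.e. set W e ∪ B ∪ F
    obtain ⟨d, hd⟩ := ce_union_finite (ce_union ⟨e, rfl⟩ hB) hFfin
    have hsub : (W d)ᶜ ⊆ A \ B := by
      intro n hn
      rw [← hd] at hn
      simp only [Set.mem_compl_iff, Set.mem_union] at hn
      push_neg at hn
      obtain ⟨⟨hne, hnb⟩, hnf⟩ := hn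
      refine ⟨?_, hnb⟩
      by_contra hna
      exact hnf ⟨hna, hne⟩
    have hDfin : ((W d)ᶜ).Finite := himm d hsub
    have : Bᶜ \ W e ⊆ (W d)ᶜ ∪ F := by
      intro n hn
      by_cases hnf : n ∈ F
      · exact Or.inr hnf
      · left
        rw [← hd]
        simp only [Set.mem_compl_iff, Set.mem_union]
        push_neg
        exact ⟨⟨hn.2, fun hb => hn.1 hb⟩, hnf⟩
    exact (hDfin.union hFfin).subset this
  · rintro ⟨hinf, hmaj⟩
    refine ⟨hinf, fun e hsub => ?_⟩
    have hAc : Aᶜ ⊆ W e := by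
      intro n hn
      by_contra hne
      exact hn (hsub hne).1
    have h1 : AlmostSubset Aᶜ (W e) := by
      have : Aᶜ \ W e = ∅ := Set.diff_eq_empty.2 hAc
      rw [AlmostSubset, this]
      exact Set.finite_empty
    have h2 : (Bᶜ \ W e).Finite := hmaj e h1
    refine h2.subset fun n hn => ⟨fun hb => (hsub hn).2 hb, hn⟩

end Thesis
end
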